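/- Let 0 < q < 1, t > 0, n ∈ ℕ, and let u be a nonzero complex number. Then the Ismail–Masson polynomial evaluated at the scaled point sinh ξ_n = (q^{−nt}u − q^{nt}u^{−1})/2 (with e^{ξ_n} = q^{−nt}u) satisfies |h_n(sinh ξ_n | q)| = |Σ_{k=0}^n [n;k]_q q^{k(k−n)} (−1)^k (q^{−nt}u)^{n−2k}| ≤ |u|^n q^{−n²t} A_q(−q^{n(2t−1)} |u|^{−2}). -/

import Mathlib

/-- The finite q-Pochhammer symbol `(a;q)_n = ∏_{j=0}^{n-1} (1 - a q^j)` in `ℂ`,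
with real base `q`. -/
noncomputable def qPochC (q : ℝ) (a : ℂ) (n : ℕ) : ℂ :=
  ∏ j ∈ Finset.range n, (1 - a * (q : ℂ) ^ j)

/-- The finite q-Pochhammer symbol `(a;q)_n = ∏_{j=0}^{n-1} (1 - a q^j)` in `ℝ`. -/
noncomputable def qPochR (q a : ℝ) (n : ℕ) : ℝ :=
  ∏ j ∈ Finset.range n, (1 - a * q ^ j)

/-- The q-binomial coefficient `[n; k]_q = (q;q)_n / ((q;q)_k (q;q)_{n−k})` in `ℂ`. -/
noncomputable def qBinomC (q : ℝ) (n k : ℕ) : ℂ :=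
  qPochC q q n / (qPochC q q k * qPochC q q (n - k))

/-- The Ramanujan function restricted to real arguments:
`A_q(x) = Σ_{k=0}^∞ q^{k²} (−x)^k / (q;q)_k`. -/
noncomputable def ramanujanAqR (q x : ℝ) : ℝ :=
  ∑' k : ℕ, q ^ (k ^ 2) * (-x) ^ k / qPochR q q k

open Filter Topology

section AuxIM
variable {q : ℝ}

lemma qPochR_pos (hq0 : 0 < q) (hq1 : q < 1) (k : ℕ) : 0 < qPochR q q k := by
  apply Finset.prod_pos
  intro j _
  have h1 : q ^ (j + 1) < 1 := pow_lt_one₀ hq0.le hq1 (Nat.succ_ne_zero j)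
  rw [pow_succ, mul_comm] at h1
  linarith

lemma qPochR_anti (hq0 : 0 < q) (hq1 : q < 1) {m n : ℕ} (h : m ≤ n) :
    qPochR q q n ≤ qPochR q q m := by
  induction n, h using Nat.le_induction with
  | base => exact le_refl _
  | succ n hmn ih =>
    have hpos := qPochR_pos hq0 hq1 n
    have h1 : q ^ (n + 1) < 1 := pow_lt_one₀ hq0.le hq1 (Nat.succ_ne_zero n)
    rw [pow_succ, mul_comm] at h1
    calc qPochR q q (n + 1) = qPochR q q n * (1 - q * q ^ n) := by
          rw [qPochR, Finset.prod_range_succ]; rfl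
      _ ≤ qPochR q q n * 1 := by
          have h2 : (0:ℝ) ≤ q * q ^ n := by positivity
          nlinarith
      _ ≤ qPochR q q m := by rw [mul_one]; exact ih

lemma qPochC_eq (k : ℕ) : qPochC q q k = ((qPochR q q k : ℝ) : ℂ) := by
  unfold qPochC qPochR
  push_cast
  rfl

lemma key_eq (q t : ℝ) (hq0 : 0 < q) (A : ℝ) (hA : 0 < A) (n k : ℕ) :
    q ^ ((k:ℤ) * ((k:ℤ) - (n:ℤ))) * (q ^ (-(n:ℝ) * t) * A) ^ ((n:ℤ) - 2*(k:ℤ)) =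
    A ^ n * q ^ (-((n:ℝ)^2) * t) * (q ^ (k^2) * (q ^ ((n:ℝ)*(2*t-1)) / A ^ 2) ^ k) := by
  have hq0' : (0:ℝ) ≤ q := hq0.le
  have hA' : (0:ℝ) ≤ A := hA.le
  rw [mul_zpow]
  rw [← Real.rpow_intCast q ((k:ℤ) * ((k:ℤ) - (n:ℤ))),
      ← Real.rpow_intCast (q ^ (-(n:ℝ) * t)) ((n:ℤ) - 2*(k:ℤ)),
      ← Real.rpow_intCast A ((n:ℤ) - 2*(k:ℤ)),
      ← Real.rpow_natCast A n, ← Real.rpow_natCast q (k^2),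
      ← Real.rpow_natCast (q ^ ((n:ℝ)*(2*t-1)) / A ^ 2) k,
      ← Real.rpow_mul hq0',
      Real.div_rpow (Real.rpow_nonneg hq0' _) (by positivity),
      ← Real.rpow_mul hq0',
      ← Real.rpow_natCast A 2, ← Real.rpow_mul hA']
  simp only [Real.rpow_def_of_pos hq0, Real.rpow_def_of_pos hA, div_eq_mul_inv,
      ← Real.exp_neg, ← Real.exp_add]
  rw [Real.exp_eq_exp]
  push_cast
  ring

lemma f_summable (hq0 : 0 < q) (hq1 : q < 1) (c : ℝ) (hc : 0 < c) :
    Summable (fun k : ℕ => q ^ (k ^ 2) * c ^ k / qPochR q q k) := by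
  set f : ℕ → ℝ := fun k => q ^ (k ^ 2) * c ^ k / qPochR q q k with hf
  have hfpos : ∀ k, 0 < f k := fun k => by
    have := qPochR_pos hq0 hq1 k
    positivity
  apply summable_of_ratio_norm_eventually_le (r := 1/2) (show (1:ℝ)/2 < 1 by norm_num)
  have htz : Filter.Tendsto (fun k : ℕ => q ^ k * c) Filter.atTop (𝓝 0) := by
    simpa using (tendsto_pow_atTop_nhds_zero_of_lt_one hq0.le hq1).mul_const c
  have hev := htz.eventually_lt_const (show (0:ℝ) < (1 - q)/2 by linarith)
  filter_upwards [hev] with k hk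
  have hPpos := qPochR_pos hq0 hq1 k
  have hden : 0 < 1 - q * q ^ k := by
    have h1 : q ^ (k + 1) < 1 := pow_lt_one₀ hq0.le hq1 (Nat.succ_ne_zero k)
    rw [pow_succ, mul_comm] at h1
    linarith
  have hstep : f (k + 1) = f k * (q ^ (2*k+1) * c / (1 - q * q ^ k)) := by
    have hP : qPochR q q (k+1) = qPochR q q k * (1 - q * q ^ k) := by
      rw [qPochR, Finset.prod_range_succ]; rfl
    have hq2 : q ^ ((k+1)^2) = q ^ (k^2) * q ^ (2*k+1) := by
      rw [← pow_add]; ring_nf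
    simp only [hf, hP, hq2, pow_succ]
    field_simp
    ring
  have hq2k : q ^ (2*k+1) ≤ q ^ k :=
    pow_le_pow_of_le_one hq0.le hq1.le (by omega)
  have hqk1 : q * q ^ k ≤ q := by
    nlinarith [pow_le_one₀ hq0.le hq1.le (n := k), pow_nonneg hq0.le k]
  have hratio : q ^ (2*k+1) * c / (1 - q * q ^ k) ≤ 1/2 := by
    rw [div_le_iff₀ hden]
    nlinarith [pow_nonneg hq0.le k, pow_nonneg hq0.le (2*k+1)]
  rw [Real.norm_eq_abs, Real.norm_eq_abs, abs_of_pos (hfpos _), abs_of_pos (hfpos _), hstep,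
      mul_comm (f k)]
  exact mul_le_mul_of_nonneg_right hratio (hfpos k).le

end AuxIM

/-- For `0 < q < 1`, `t > 0`, `n ∈ ℕ` and nonzero complex `u`, the Ismail–Masson
polynomial at the scaled point `sinh ξ_n = (q^{−nt}u − q^{nt}u^{−1})/2` (with
`e^{ξ_n} = q^{−nt}u`) satisfies
`|h_n(sinh ξ_n | q)| ≤ |u|^n q^{−n²t} A_q(−q^{n(2t−1)} |u|^{−2})`. -/
theorem abs_ismailMasson_scaled_le (q t : ℝ) (hq0 : 0 < q) (hq1 : q < 1) (ht : 0 < t)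
    (n : ℕ) (u : ℂ) (hu : u ≠ 0) :
    ‖∑ k ∈ Finset.range (n + 1),
        qBinomC q n k * (q : ℂ) ^ ((k : ℤ) * ((k : ℤ) - (n : ℤ))) * (-1) ^ k *
          (((q ^ (-(n : ℝ) * t) : ℝ) : ℂ) * u) ^ ((n : ℤ) - 2 * (k : ℤ))‖ ≤
      ‖u‖ ^ n * q ^ (-((n : ℝ) ^ 2) * t) *
        ramanujanAqR q (-(q ^ ((n : ℝ) * (2 * t - 1)) / ‖u‖ ^ 2)) := by
  set A : ℝ := ‖u‖ with hA
  have hA0 : 0 < A := norm_pos_iff.mpr hu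
  set c : ℝ := q ^ ((n:ℝ) * (2*t-1)) / A ^ 2 with hc
  have hc0 : 0 < c := div_pos (Real.rpow_pos_of_pos hq0 _) (by positivity)
  set f : ℕ → ℝ := fun k => q ^ (k ^ 2) * c ^ k / qPochR q q k with hf
  have hfnn : ∀ k, 0 ≤ f k := fun k => by
    have := qPochR_pos hq0 hq1 k
    positivity
  have hsum : Summable f := f_summable hq0 hq1 c hc0
  have hram : ramanujanAqR q (-(q ^ ((n : ℝ) * (2 * t - 1)) / A ^ 2)) = ∑' k, f k := by
    unfold ramanujanAqR
    congr 1
    ext k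
    rw [hf, neg_neg, ← hc]
  have key : ∀ k ∈ Finset.range (n+1),
      ‖qBinomC q n k * (q : ℂ) ^ ((k : ℤ) * ((k : ℤ) - (n : ℤ))) * (-1) ^ k *
          (((q ^ (-(n : ℝ) * t) : ℝ) : ℂ) * u) ^ ((n : ℤ) - 2 * (k : ℤ))‖ ≤
      A ^ n * q ^ (-((n:ℝ)^2) * t) * f k := by
    intro k hk
    rw [Finset.mem_range] at hk
    have hkn : k ≤ n := Nat.lt_succ_iff.mp hk
    have hPk := qPochR_pos hq0 hq1 k
    have hPnk := qPochR_pos hq0 hq1 (n - k)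
    have hPn := qPochR_pos hq0 hq1 n
    -- compute the absolute value
    have habs : ‖qBinomC q n k * (q : ℂ) ^ ((k : ℤ) * ((k : ℤ) - (n : ℤ))) * (-1) ^ k *
          (((q ^ (-(n : ℝ) * t) : ℝ) : ℂ) * u) ^ ((n : ℤ) - 2 * (k : ℤ))‖ =
        (qPochR q q n / (qPochR q q k * qPochR q q (n - k))) *
          (q ^ ((k:ℤ) * ((k:ℤ) - (n:ℤ))) * (q ^ (-(n:ℝ) * t) * A) ^ ((n:ℤ) - 2*(k:ℤ))) := by
      rw [norm_mul, norm_mul, norm_mul, norm_zpow, norm_zpow, norm_mul]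
      rw [qBinomC, qPochC_eq, qPochC_eq, qPochC_eq]
      rw [norm_div, norm_mul]
      simp only [Complex.norm_real, Real.norm_eq_abs, norm_pow, norm_neg, norm_one, one_pow]
      rw [abs_of_pos hPk, abs_of_pos hPnk, abs_of_pos hPn, abs_of_pos hq0,
        abs_of_pos (Real.rpow_pos_of_pos hq0 (-(n:ℝ) * t)), ← hA]
      ring
    rw [habs, key_eq q t hq0 A hA0 n k]
    have hB : qPochR q q n / (qPochR q q k * qPochR q q (n-k)) ≤ 1 / qPochR q q k := by
      rw [div_le_div_iff₀ (mul_pos hPk hPnk) hPk]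
      nlinarith [qPochR_anti hq0 hq1 (Nat.sub_le n k)]
    have hqE : (0:ℝ) < q ^ (-((n:ℝ)^2) * t) := Real.rpow_pos_of_pos hq0 _
    calc qPochR q q n / (qPochR q q k * qPochR q q (n - k)) *
          (A ^ n * q ^ (-((n:ℝ)^2) * t) * (q ^ (k^2) * c ^ k))
        ≤ (1 / qPochR q q k) * (A ^ n * q ^ (-((n:ℝ)^2) * t) * (q ^ (k^2) * c ^ k)) := by
          apply mul_le_mul_of_nonneg_right hB
          positivity
      _ = A ^ n * q ^ (-((n:ℝ)^2) * t) * f k := by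
          rw [hf]
          field_simp
  calc ‖∑ k ∈ Finset.range (n + 1),
        qBinomC q n k * (q : ℂ) ^ ((k : ℤ) * ((k : ℤ) - (n : ℤ))) * (-1) ^ k *
          (((q ^ (-(n : ℝ) * t) : ℝ) : ℂ) * u) ^ ((n : ℤ) - 2 * (k : ℤ))‖
      ≤ ∑ k ∈ Finset.range (n + 1), ‖
          qBinomC q n k * (q : ℂ) ^ ((k : ℤ) * ((k : ℤ) - (n : ℤ))) * (-1) ^ k *
          (((q ^ (-(n : ℝ) * t) : ℝ) : ℂ) * u) ^ ((n : ℤ) - 2 * (k : ℤ))‖ :=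
        norm_sum_le _ _
    _ ≤ ∑ k ∈ Finset.range (n + 1), A ^ n * q ^ (-((n:ℝ)^2) * t) * f k :=
        Finset.sum_le_sum key
    _ = A ^ n * q ^ (-((n:ℝ)^2) * t) * ∑ k ∈ Finset.range (n + 1), f k := by
        rw [Finset.mul_sum]
    _ ≤ A ^ n * q ^ (-((n:ℝ)^2) * t) * ∑' k, f k := by
        exact mul_le_mul_of_nonneg_left (Summable.sum_le_tsum _ (fun k _ => hfnn k) hsum)
          (by positivity)
    _ = _ := by rw [hram]
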